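/- Let D be an infinite division ring, I a set, and F a filter on I which is not the intersection of finitely many card(D)^+-complete ultrafilters on I. Then dim_D(D^I/F) = card(D^I/F), where dim_D can be taken to mean the dimension either as a right or as a left D-vector space. -/

import Mathlib

universe u

/-- A filter is `κ`-complete if it is closed under intersections of
families of fewer than `κ` of its members. -/
def KappaComplete {I : Type u} (κ : Cardinal.{u}) (F : Filter I) : Prop :=
  ∀ 𝒮 : Set (Set I), Cardinal.mk 𝒮 < κ → (∀ s ∈ 𝒮, s ∈ F) → ⋂₀ 𝒮 ∈ F

/-- The left `D`-subspace of `D^I` of elements vanishing on a member of the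
filter `F`; the quotient by it is the reduced power `D^I/F` as a left
`D`-vector space. -/
def zeroSetSubmodule (D : Type u) [DivisionRing D] {I : Type u} (F : Filter I) :
    Submodule D (I → D) where
  carrier := {f | {i | f i = 0} ∈ F}
  zero_mem' := by simpa using Filter.univ_mem
  add_mem' := by
    intro f g hf hg
    refine Filter.mem_of_superset (Filter.inter_mem hf hg) (fun i hi => ?_)
    have h1 : f i = 0 := hi.1
    have h2 : g i = 0 := hi.2
    show (f + g) i = 0
    simp [h1, h2]
  smul_mem' := by
    intro c f hf
    refine Filter.mem_of_superset hf (fun i hi => ?_)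
    have h1 : f i = 0 := hi
    show (c • f) i = 0
    simp [h1]

/-- The right `D`-subspace (i.e. `Dᵐᵒᵖ`-submodule) of `D^I` of elements
vanishing on a member of the filter `F`; the quotient by it is the reduced
power `D^I/F` as a right `D`-vector space. -/
def zeroSetSubmoduleRight (D : Type u) [DivisionRing D] {I : Type u}
    (F : Filter I) : Submodule Dᵐᵒᵖ (I → D) where
  carrier := {f | {i | f i = 0} ∈ F}
  zero_mem' := by simpa using Filter.univ_mem
  add_mem' := by
    intro f g hf hg
    refine Filter.mem_of_superset (Filter.inter_mem hf hg) (fun i hi => ?_)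
    have h1 : f i = 0 := hi.1
    have h2 : g i = 0 := hi.2
    show (f + g) i = 0
    simp [h1, h2]
  smul_mem' := by
    intro c f hf
    refine Filter.mem_of_superset hf (fun i hi => ?_)
    have h1 : f i = 0 := hi
    show (c • f) i = 0
    simp [h1]

open Cardinal Set

lemma mem_zeroSetSubmodule_iff {D : Type u} [DivisionRing D] {I : Type u} {F : Filter I}
    {f : I → D} : f ∈ zeroSetSubmodule D F ↔ {i | f i = 0} ∈ F := Iff.rfl


/-- crude upper bound for the cardinality of finsupp -/
lemma mk_finsupp_le' (ι M : Type u) [Zero M] : #(ι →₀ M) ≤ max (max #ι #M) ℵ₀ := by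
  cases fintypeOrInfinite ι with
  | inl h =>
    rw [Cardinal.mk_finsupp_of_fintype]
    rcases le_or_gt ℵ₀ #M with hM | hM
    · exact le_max_of_le_left <| le_max_of_le_right <| power_nat_le hM
    · exact le_max_of_le_right (power_lt_aleph0 hM (nat_lt_aleph0 _)).le
  | inr h =>
    rcases subsingleton_or_nontrivial M with hM | hM
    · have : Subsingleton (ι →₀ M) := inferInstance
      exact le_max_of_le_right (le_of_lt (lt_of_le_of_lt (Cardinal.le_one_iff_subsingleton.mpr this) one_lt_aleph0))
    · rw [Cardinal.mk_finsupp_of_infinite]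
      exact le_max_left _ _


/-- cardinality of a vector space over a division ring -/
lemma card_le_max_rank (K V : Type u) [DivisionRing K] [AddCommGroup V] [Module K V] :
    #V ≤ max (max (Module.rank K V) #K) ℵ₀ := by
  obtain ⟨⟨ι, b⟩⟩ := Module.Free.exists_basis (R := K) (M := V)
  rw [b.repr.toEquiv.cardinal_eq, ← b.mk_eq_rank'']
  exact mk_finsupp_le' ι K


lemma card_eq_rank_of_card_le_rank (K V : Type u) [DivisionRing K] [Infinite K] [AddCommGroup V]
    [Module K V] (h : #K ≤ Module.rank K V) : Module.rank K V = #V := by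
  obtain ⟨⟨ι, b⟩⟩ := Module.Free.exists_basis (R := K) (M := V)
  rw [← b.mk_eq_rank''] at h ⊢
  have hι : Infinite ι := Cardinal.infinite_iff.mpr ((Cardinal.infinite_iff.mp inferInstance).trans h)
  rw [b.repr.toEquiv.cardinal_eq, Cardinal.mk_finsupp_of_infinite, max_eq_left h]

variable {D : Type u} [DivisionRing D]

/-- The MO-argument: if all members of `W` are infinite and `B` is small relative to `D`,
then the reduced power `D^B/W` has dimension at least `#D`. -/
lemma mol {B : Type u} (W : Filter B) (hW : ∀ A ∈ W, A.Infinite)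
    (hB : max ℵ₀ #B < #D) :
    #D ≤ Module.rank D ((B → D) ⧸ zeroSetSubmodule D W) := by
  by_contra hrank
  push_neg at hrank
  set Z := zeroSetSubmodule D W
  obtain ⟨⟨A, bQ⟩⟩ := Module.Free.exists_basis (R := D) (M := (B → D) ⧸ Z)
  have hA : #A < #D := by rwa [bQ.mk_eq_rank'']
  have hℵ : ℵ₀ < #D := lt_of_le_of_lt (le_max_left _ _) hB
  have hBD : #B < #D := lt_of_le_of_lt (le_max_right _ _) hB
  -- lifts of the basis vectors
  have hsurj : Function.Surjective (Z.mkQ) := Submodule.mkQ_surjective Z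
  choose v hv using fun a : A => hsurj (bQ a)
  -- the "entries" division subring, inside the opposite ring
  set L : Subfield Dᵐᵒᵖ :=
    Subfield.closure (Set.range fun p : A × B => MulOpposite.op (v p.1 p.2)) with hL
  have hLcard : #L < #D := by
    refine lt_of_le_of_lt (Subfield.cardinalMk_closure_le_max _) ?_
    refine max_lt (lt_of_le_of_lt mk_range_le ?_) hℵ
    rw [mk_prod, lift_id, lift_id]
    exact lt_of_le_of_lt (mul_le_max _ _) (max_lt (max_lt hA hBD) hℵ)
  letI : Module L D := Module.compHom D L.subtype
  -- D is an infinite-dimensional L-vector space of dimension at least #B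
  obtain ⟨⟨ι, bD⟩⟩ := Module.Free.exists_basis (R := L) (M := D)
  have hι : #B ≤ #ι := by
    by_contra hlt
    push_neg at hlt
    have : #D < #D := by
      calc #D = #(ι →₀ L) := bD.repr.toEquiv.cardinal_eq
        _ ≤ max (max #ι #L) ℵ₀ := mk_finsupp_le' ι L
        _ < #D := max_lt (max_lt (hlt.trans hBD) hLcard) hℵ
    exact lt_irrefl _ this
  obtain ⟨e⟩ := (Cardinal.le_def _ _).mp hι
  set w : B → D := fun b => bD (e b) with hw
  have hwli : LinearIndependent L w := bD.linearIndependent.comp e e.injective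
  -- expand [w] in the basis bQ
  have rep := bQ.linearCombination_repr (Z.mkQ w)
  rw [Finsupp.linearCombination_apply, Finsupp.sum] at rep
  set c := bQ.repr (Z.mkQ w) with hc
  set s := c.support with hs
  have hmem : (w - ∑ a ∈ s, c a • v a) ∈ Z := by
    have h0 : Z.mkQ (w - ∑ a ∈ s, c a • v a) = 0 := by
      rw [map_sub, map_sum]
      simp_rw [map_smul, hv]
      rw [rep, sub_self]
    rwa [Submodule.mkQ_apply, Submodule.Quotient.mk_eq_zero] at h0
  have hSmem : {b | (w - ∑ a ∈ s, c a • v a) b = 0} ∈ W := hmem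
  have hSinf : Set.Infinite {b | (w - ∑ a ∈ s, c a • v a) b = 0} := hW _ hSmem
  obtain ⟨t, htsub, htcard⟩ := Set.Infinite.exists_subset_card_eq hSinf (s.card + 1)
  -- each w b for b ∈ t lies in the L-span of the c a
  set N : Submodule L D := Submodule.span L (Set.range fun a : {x // x ∈ s} => c a.1) with hN
  have hwN : ∀ b ∈ t, w b ∈ N := by
    intro b hb
    have hb0 : (w - ∑ a ∈ s, c a • v a) b = 0 := htsub hb
    have heq : w b = ∑ a ∈ s, c a * v a b := by
      have h1 := sub_eq_zero.mp hb0
      calc w b = (∑ a ∈ s, c a • v a) b := h1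
        _ = ∑ a ∈ s, c a * v a b := by
          rw [Finset.sum_apply]; exact Finset.sum_congr rfl fun a _ => rfl
    rw [heq]
    have hterm : ∀ a ∈ s, c a * v a b
        = (⟨MulOpposite.op (v a b), Subfield.subset_closure ⟨(a, b), rfl⟩⟩ : L) • c a :=
      fun a _ => rfl
    rw [Finset.sum_congr rfl hterm]
    exact Submodule.sum_smul_mem N _ fun a ha => Submodule.subset_span ⟨⟨a, ha⟩, rfl⟩
  -- contradiction: t.card independent vectors in a space of dimension ≤ s.card
  have h1 : LinearIndependent L (fun b : {x // x ∈ t} => w b.1) :=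
    hwli.comp _ Subtype.val_injective
  have hli : LinearIndependent L
      (fun b : {x // x ∈ t} => (⟨w b.1, hwN b.1 b.2⟩ : N)) :=
    LinearIndependent.of_comp N.subtype h1
  have hcard := hli.cardinal_le_rank
  have hNrank : Module.rank L N ≤ (s.card : Cardinal) := by
    refine (rank_span_le _).trans (mk_range_le.trans ?_)
    simp
  have hfin : ((s.card + 1 : ℕ) : Cardinal) ≤ (s.card : Cardinal) := by
    calc ((s.card + 1 : ℕ) : Cardinal) = #{x // x ∈ t} := by rw [← htcard]; simp
      _ ≤ Module.rank L N := hcard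
      _ ≤ s.card := hNrank
  rw [Nat.cast_le] at hfin
  omega

/-- The diagonalisation argument: if `W` is a proper filter on a linearly ordered type `B`
whose bounded initial segments are null and small, and `#D ≤ #B`, then the reduced power
has dimension at least `#D`. -/
lemma dl {B : Type u} [LinearOrder B] (W : Filter B) [W.NeBot] [Infinite D]
    (hbdd : ∀ b : B, (Iic b)ᶜ ∈ W) (hIio : ∀ b : B, #(Iio b) < #D) (hBD : #D ≤ #B) :
    #D ≤ Module.rank D ((B → D) ⧸ zeroSetSubmodule D W) := by
  by_contra hrank
  push_neg at hrank
  set Z := zeroSetSubmodule D W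
  obtain ⟨⟨A, bQ⟩⟩ := Module.Free.exists_basis (R := D) (M := (B → D) ⧸ Z)
  have hA : #A < #D := by rwa [bQ.mk_eq_rank'']
  have hsurj : Function.Surjective (Z.mkQ) := Submodule.mkQ_surjective Z
  choose v hv using fun a : A => hsurj (bQ a)
  set P : Submodule D (B → D) := Submodule.span D (Set.range v) with hP
  -- the span of the lifts has cardinality at most #B
  have hPcard : #P ≤ #B := by
    refine le_trans (card_le_max_rank D P) (le_trans ?_ hBD)
    have h1 : Module.rank D P ≤ #A := (rank_span_le _).trans mk_range_le
    have h2 : ℵ₀ ≤ #D := Cardinal.infinite_iff.mp inferInstance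
    exact max_le (max_le (h1.trans hA.le) le_rfl) h2
  -- enumerate the span by B
  obtain ⟨emb⟩ := (Cardinal.le_def _ _).mp hPcard
  have hg : ∃ g : B → P, Function.Surjective g := by
    classical
    refine ⟨fun b => if h : ∃ x : P, emb x = b then h.choose else ⟨0, Submodule.zero_mem P⟩, ?_⟩
    intro x
    refine ⟨emb x, ?_⟩
    have hx : ∃ y : P, emb y = emb x := ⟨x, rfl⟩
    simp only [hx, dif_pos]
    exact emb.injective hx.choose_spec
  obtain ⟨g, hgsurj⟩ := hg
  -- diagonalise
  have hpick : ∀ b : B, ∃ d : D, d ∉ (fun ξ => (g ξ : B → D) b) '' (Iic b) := by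
    intro b
    by_contra hall
    push_neg at hall
    have hle : #D ≤ #((fun ξ => (g ξ : B → D) b) '' (Iic b)) := by
      have h0 := Cardinal.mk_le_mk_of_subset (fun d _ => hall d : (univ : Set D) ⊆ _)
      rwa [Cardinal.mk_univ] at h0
    have h2 : #((fun ξ => (g ξ : B → D) b) '' (Iic b)) < #D := by
      refine lt_of_le_of_lt (Cardinal.mk_image_le) ?_
      have : #(Iic b) ≤ #(Iio b) + 1 := by
        rw [show Iic b = insert b (Iio b) by ext x; simp [le_iff_lt_or_eq, or_comm]]
        exact Cardinal.mk_insert_le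
      refine lt_of_le_of_lt this ?_
      have h3 : (1 : Cardinal) < #D := lt_of_lt_of_le one_lt_aleph0
        (Cardinal.infinite_iff.mp inferInstance)
      exact Cardinal.add_lt_of_lt (Cardinal.infinite_iff.mp inferInstance) (hIio b) h3
    exact absurd hle (not_le.mpr h2)
  choose u hu using hpick
  -- [u] is in the span of the basis, i.e. in the image of P
  have hutop : Z.mkQ u ∈ Submodule.map Z.mkQ P := by
    have h1 : Submodule.map Z.mkQ P = ⊤ := by
      rw [hP, Submodule.map_span]
      have : Z.mkQ '' Set.range v = Set.range bQ := by
        rw [← Set.range_comp]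
        exact congrArg _ (funext fun a => hv a)
      rw [this, bQ.span_eq]
    rw [h1]; trivial
  obtain ⟨p, hpP, hpu⟩ := hutop
  obtain ⟨ξ, hξ⟩ := hgsurj ⟨p, hpP⟩
  -- u agrees with g ξ on a W-set, but they differ above ξ
  have hZ : (u - p) ∈ Z := by
    rw [← Submodule.Quotient.mk_eq_zero]
    rw [show (Submodule.Quotient.mk (u - p) : (B → D) ⧸ Z) = Z.mkQ u - Z.mkQ p from rfl, hpu,
      sub_self]
  have hset : {b | (u - p) b = 0} ∈ W := hZ
  have hsub : {b | (u - p) b = 0} ⊆ Iio ξ := by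
    intro b hb
    have hb' : u b = p b := sub_eq_zero.mp hb
    by_contra hlt
    simp only [Iio, mem_setOf_eq, not_lt] at hlt
    exact hu b ⟨ξ, hlt, by show ((g ξ : B → D) b) = u b; rw [hξ]; exact hb'.symm⟩
  have : (Iio ξ) ∩ (Iic ξ)ᶜ = ∅ := by
    ext x; simp only [mem_inter_iff, mem_Iio, mem_compl_iff, mem_Iic, mem_empty_iff_false,
      iff_false, not_and, not_not]
    exact fun h => h.le
  have hbot : (∅ : Set B) ∈ W := by
    rw [← this]
    exact Filter.inter_mem (Filter.mem_of_superset hset hsub) (hbdd ξ)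
  exact (Filter.empty_notMem W) hbot

section transfer
variable {I : Type u} {J : Type u}

/-- If `G` is finer than `F` then the reduced power mod `G` is a quotient of the one mod `F`. -/
lemma rank_reduced_le_of_le (F G : Filter I) (h : G ≤ F) :
    Module.rank D ((I → D) ⧸ zeroSetSubmodule D G)
      ≤ Module.rank D ((I → D) ⧸ zeroSetSubmodule D F) := by
  have hZ : zeroSetSubmodule D F ≤ zeroSetSubmodule D G := by
    intro f hf
    exact h hf
  have hZ' : zeroSetSubmodule D F ≤ LinearMap.ker (zeroSetSubmodule D G).mkQ := by
    rwa [Submodule.ker_mkQ]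
  refine LinearMap.rank_le_of_surjective ((zeroSetSubmodule D F).liftQ
    (zeroSetSubmodule D G).mkQ hZ') ?_
  intro x
  obtain ⟨y, rfl⟩ := Submodule.mkQ_surjective _ x
  exact ⟨Submodule.Quotient.mk y, rfl⟩

/-- The reduced power mod the pushforward filter embeds into the reduced power. -/
lemma rank_reduced_map_le (F : Filter I) (r : I → J) :
    Module.rank D ((J → D) ⧸ zeroSetSubmodule D (Filter.map r F))
      ≤ Module.rank D ((I → D) ⧸ zeroSetSubmodule D F) := by
  set Φ : (J → D) →ₗ[D] ((I → D) ⧸ zeroSetSubmodule D F) :=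
    (zeroSetSubmodule D F).mkQ.comp (LinearMap.funLeft D D r) with hΦ
  have hker : LinearMap.ker Φ = zeroSetSubmodule D (Filter.map r F) := by
    ext g
    show (zeroSetSubmodule D F).mkQ (g ∘ r) = 0 ↔ _
    rw [Submodule.mkQ_apply, Submodule.Quotient.mk_eq_zero]
    show {i | g (r i) = 0} ∈ F ↔ {j | g j = 0} ∈ Filter.map r F
    rw [Filter.mem_map]
    rfl
  refine LinearMap.rank_le_of_injective
    ((zeroSetSubmodule D (Filter.map r F)).liftQ Φ hker.ge) ?_
  rw [← LinearMap.ker_eq_bot]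
  exact Submodule.ker_liftQ_eq_bot _ _ _ hker.le

end transfer

section caseB
variable {I : Type u}

/-- A `card D⁺`-complete ultrafilter has a limit for every function to `D`. -/
lemma exists_lim (U : Ultrafilter I) (hU : KappaComplete (Order.succ #D) (U : Filter I)) (f : I → D) :
    ∃ d, {i | f i = d} ∈ U := by
  by_contra hno
  push_neg at hno
  have hmem : ∀ d : D, {i | f i = d}ᶜ ∈ U := fun d =>
    (Ultrafilter.compl_mem_iff_notMem).mpr (hno d)
  have hcard : #(Set.range fun d : D => {i | f i = d}ᶜ) < Order.succ #D :=
    lt_of_le_of_lt mk_range_le (Order.lt_succ _)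
  have h0 := hU _ hcard (by rintro s ⟨d, rfl⟩; exact hmem d)
  have hempty : ⋂₀ (Set.range fun d : D => {i | f i = d}ᶜ) = ∅ := by
    ext i
    simp only [mem_sInter, mem_range, mem_empty_iff_false, iff_false, not_forall]
    exact ⟨_, ⟨f i, rfl⟩, fun h => h rfl⟩
  rw [hempty] at h0
  exact Filter.empty_notMem (U : Filter I) h0

lemma lim_unique (U : Ultrafilter I) {f : I → D} {d d' : D}
    (h : {i | f i = d} ∈ U) (h' : {i | f i = d'} ∈ U) : d = d' := by
  by_contra hne
  have h2 := Filter.inter_mem h h'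
  obtain ⟨i, h3, h4⟩ := Filter.nonempty_of_mem h2
  exact hne (h3.symm.trans h4)

lemma caseB [Infinite D] (F : Filter I)
    (hall : ∀ U : Ultrafilter I, ↑U ≤ F → KappaComplete (Order.succ #D) (U : Filter I))
    (hnot : ¬∃ (n : ℕ) (U : Fin n → Ultrafilter I),
      (∀ m, KappaComplete (Order.succ #D) (U m : Filter I)) ∧ F = ⨆ m, (U m : Filter I)) :
    #D ≤ Module.rank D ((I → D) ⧸ zeroSetSubmodule D F) := by
  classical
  have hℵD : ℵ₀ ≤ #D := Cardinal.infinite_iff.mp inferInstance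
  set X : Set (Ultrafilter I) := {U | ↑U ≤ F} with hX
  have hXinf : X.Infinite := by
    intro hfin
    haveI := hfin.fintype
    refine hnot ⟨Fintype.card X, fun m => ((Fintype.equivFin ↥X).symm m : Ultrafilter I),
      fun m => hall _ ((Fintype.equivFin ↥X).symm m).2, ?_⟩
    have h1 := (Filter.iSup_ultrafilter_le_eq F).symm
    rw [h1]
    have h2 : (⨆ g : Ultrafilter I, ⨆ (_ : ↑g ≤ F), (g : Filter I))
        = ⨆ x : ↥X, ((x : Ultrafilter I) : Filter I) := by
      apply le_antisymm
      · exact iSup₂_le fun g hg => le_iSup (fun x : ↥X => ((x : Ultrafilter I) : Filter I)) ⟨g, hg⟩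
      · exact iSup_le fun x => le_iSup₂ (f := fun (g : Ultrafilter I) (_ : ↑g ≤ F) => (g : Filter I)) x.1 x.2
    rw [h2]
    exact ((Fintype.equivFin ↥X).symm.iSup_comp (g := fun x : ↥X => (↑↑x : Filter I))).symm
  set emb := hXinf.natEmbedding
  set Un : ℕ → Ultrafilter I := fun n => ↑(emb n) with hUn
  have hUle : ∀ n, ↑(Un n) ≤ F := fun n => (emb n).2
  have hUinj : Function.Injective Un := fun n m h => by
    have := emb.injective (Subtype.ext h)
    exact this
  -- pairwise separation
  have sep : ∀ n m : ℕ, ∃ S : Set I, n = m ∨ (S ∈ Un n ∧ Sᶜ ∈ Un m) := by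
    intro n m
    rcases eq_or_ne n m with h | h
    · exact ⟨univ, Or.inl h⟩
    · by_contra hno
      push_neg at hno
      have h2 : ∀ S : Set I, S ∈ Un n → S ∈ Un m := by
        intro S hS
        exact Ultrafilter.compl_notMem_iff.mp ((hno S).2 hS)
      have h3 : (Un m : Filter I) ≤ (Un n : Filter I) := fun S hS => h2 S hS
      exact h (hUinj (Ultrafilter.coe_le_coe.mp h3)).symm
  choose Bs hBs using sep
  set A : ℕ → Set I := fun n => ⋂ m, (if n = m then (univ : Set I) else Bs n m ∩ (Bs m n)ᶜ) with hA
  have hAU : ∀ n, A n ∈ Un n := by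
    intro n
    have h0 := hall (Un n) (hUle n)
    have hcard : #(Set.range fun m : ℕ => (if n = m then (univ : Set I) else Bs n m ∩ (Bs m n)ᶜ))
        < Order.succ #D := by
      haveI := (Set.countable_range fun m : ℕ =>
        (if n = m then (univ : Set I) else Bs n m ∩ (Bs m n)ᶜ)).to_subtype
      calc #(Set.range fun m : ℕ => (if n = m then (univ : Set I) else Bs n m ∩ (Bs m n)ᶜ))
          ≤ ℵ₀ := Cardinal.mk_le_aleph0
        _ ≤ #D := hℵD
        _ < Order.succ #D := Order.lt_succ _
    have h1 := h0 _ hcard ?_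
    · rwa [Set.sInter_range] at h1
    · rintro s ⟨m, rfl⟩
      rcases eq_or_ne n m with h | h
      · simp [h]
      · simp only [if_neg h]
        refine Filter.inter_mem ((hBs n m).resolve_left h).1 ?_
        exact ((hBs m n).resolve_left (Ne.symm h)).2
  have hdisj : ∀ n m, n ≠ m → A n ∩ A m ⊆ ∅ := by
    intro n m hnm x hx
    have h1 : x ∈ Bs n m ∩ (Bs m n)ᶜ := by
      have := Set.mem_iInter.mp hx.1 m
      rwa [if_neg hnm] at this
    have h2 : x ∈ Bs m n ∩ (Bs n m)ᶜ := by
      have := Set.mem_iInter.mp hx.2 n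
      rwa [if_neg (Ne.symm hnm)] at this
    exact h2.2 h1.1
  -- the limit operator
  have hex : ∀ (n : ℕ) (f : I → D), ∃ d, {i | f i = d} ∈ Un n :=
    fun n f => exists_lim (Un n) (hall (Un n) (hUle n)) f
  choose lim hlim using hex
  have huniq : ∀ (n : ℕ) (f : I → D) (d : D), {i | f i = d} ∈ Un n → lim n f = d :=
    fun n f d h => lim_unique (Un n) (hlim n f) h
  -- the linear map to D^ℕ
  set Φ : (I → D) →ₗ[D] (ℕ → D) :=
    { toFun := fun f n => lim n f
      map_add' := by
        intro f g
        funext n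
        refine huniq n (f + g) (lim n f + lim n g)
          (Filter.mem_of_superset (Filter.inter_mem (hlim n f) (hlim n g)) ?_)
        rintro i ⟨h1, h2⟩
        simp only [Set.mem_setOf_eq] at h1 h2
        show f i + g i = _
        rw [h1, h2]
      map_smul' := by
        intro c f
        funext n
        refine huniq n (c • f) (c * lim n f)
          (Filter.mem_of_superset (hlim n f) ?_)
        intro i hi
        simp only [Set.mem_setOf_eq] at hi
        show c * f i = _
        rw [hi] } with hΦ
  have hker : zeroSetSubmodule D F ≤ LinearMap.ker Φ := by
    intro f hf
    have hf' : {i | f i = 0} ∈ F := hf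
    rw [LinearMap.mem_ker]
    funext n
    exact huniq n f 0 (hUle n hf')
  set Ψ := (zeroSetSubmodule D F).liftQ Φ hker with hΨ
  have hsurj : Function.Surjective Ψ := by
    intro gf
    set f : I → D := fun i => if h : ∃ n, i ∈ A n then gf h.choose else 0 with hf
    refine ⟨Submodule.Quotient.mk f, ?_⟩
    rw [hΨ, Submodule.liftQ_apply]
    funext n
    refine huniq n f (gf n) (Filter.mem_of_superset (hAU n) ?_)
    intro i hi
    have hex2 : ∃ m, i ∈ A m := ⟨n, hi⟩
    have hm : hex2.choose = n := by
      by_contra hne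
      exact hdisj _ _ hne ⟨hex2.choose_spec, hi⟩
    show f i = gf n
    rw [hf]
    simp only [hex2, dif_pos]
    rw [hm]
  calc #D ≤ max ℵ₀ #D := le_max_right _ _
    _ ≤ Module.rank D (ℕ → D) := max_aleph0_card_le_rank_fun_nat D
    _ ≤ Module.rank D ((I → D) ⧸ zeroSetSubmodule D F) := LinearMap.rank_le_of_surjective Ψ hsurj
end caseB

section caseA
variable {I : Type u}

lemma caseA [Infinite D] (U : Ultrafilter I)
    (hU : ¬ KappaComplete (Order.succ #D) (U : Filter I)) :
    #D ≤ Module.rank D ((I → D) ⧸ zeroSetSubmodule D (U : Filter I)) := by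
  classical
  have hℵD : ℵ₀ ≤ #D := Cardinal.infinite_iff.mp inferInstance
  set P : Set Cardinal.{u} :=
    {c | ∃ 𝒮 : Set (Set I), (∀ s ∈ 𝒮, s ∈ (U : Filter I)) ∧ #𝒮 ≤ c ∧ ⋂₀ 𝒮 ∉ (U : Filter I)}
    with hP
  rw [KappaComplete] at hU
  push_neg at hU
  obtain ⟨𝒮₀, h𝒮₀card, h𝒮₀mem, h𝒮₀not⟩ := hU
  have hPne : P.Nonempty := ⟨#𝒮₀, 𝒮₀, h𝒮₀mem, le_rfl, h𝒮₀not⟩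
  set μ := sInf P with hμ
  have hμP : μ ∈ P := csInf_mem hPne
  have hμle : μ ≤ #D := le_trans (csInf_le' ⟨𝒮₀, h𝒮₀mem, le_rfl, h𝒮₀not⟩)
    (Order.lt_succ_iff.mp h𝒮₀card)
  have hμinf : ℵ₀ ≤ μ := by
    by_contra h
    push_neg at h
    obtain ⟨𝒮, hmem, hcard, hnot⟩ := hμP
    have hfin : 𝒮.Finite := lt_aleph0_iff_set_finite.mp (hcard.trans_lt h)
    exact hnot ((Filter.sInter_mem hfin).mpr hmem)
  have hmin : ∀ 𝒯 : Set (Set I), (∀ s ∈ 𝒯, s ∈ (U : Filter I)) → #𝒯 < μ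
      → ⋂₀ 𝒯 ∈ (U : Filter I) := by
    intro 𝒯 hmem hlt
    by_contra hnot
    exact absurd (csInf_le' (show #𝒯 ∈ P from ⟨𝒯, hmem, le_rfl, hnot⟩)) (not_le.mpr hlt)
  obtain ⟨𝒮, h𝒮mem, h𝒮card, h𝒮not⟩ := hμP
  have h𝒮ne : 𝒮.Nonempty := by
    rcases Set.eq_empty_or_nonempty 𝒮 with h | h
    · rw [h, sInter_empty] at h𝒮not
      exact absurd Filter.univ_mem h𝒮not
    · exact h
  set J := (Cardinal.ord μ).ToType with hJ
  have hJcard : #J = μ := by rw [hJ, Cardinal.mk_toType, Cardinal.card_ord]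
  haveI hJne : Nonempty J := by
    rw [← Cardinal.mk_ne_zero_iff, hJcard]
    exact ne_of_gt (lt_of_lt_of_le aleph0_pos hμinf)
  have hIic : ∀ β : J, #(Iic β) < μ := by
    intro β
    have h1 : #(Iic β) ≤ #(Iio β) + 1 := by
      rw [show Iic β = insert β (Iio β) by ext x; simp [le_iff_lt_or_eq, or_comm]]
      exact Cardinal.mk_insert_le
    refine lt_of_le_of_lt h1 (Cardinal.add_lt_of_lt hμinf (Cardinal.mk_Iio_ord_toType β) ?_)
    exact lt_of_lt_of_le one_lt_aleph0 hμinf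
  -- surjective enumeration of 𝒮 by J
  have hsur : ∃ e : J → Set I, (∀ β, e β ∈ 𝒮) ∧ ∀ s ∈ 𝒮, ∃ β, e β = s := by
    have h1 : #↥𝒮 ≤ #J := by rw [hJcard]; exact h𝒮card
    obtain ⟨emb⟩ := (Cardinal.le_def _ _).mp h1
    obtain ⟨s0, hs0⟩ := h𝒮ne
    refine ⟨fun β => if h : ∃ x : ↥𝒮, emb x = β then (h.choose : Set I) else s0,
      fun β => ?_, fun s hs => ?_⟩
    · by_cases h : ∃ x : ↥𝒮, emb x = β
      · simp only [h, dif_pos]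
        exact h.choose.2
      · simp only [h, dif_neg, not_false_iff]
        exact hs0
    · refine ⟨emb ⟨s, hs⟩, ?_⟩
      have hx : ∃ x : ↥𝒮, emb x = emb ⟨s, hs⟩ := ⟨⟨s, hs⟩, rfl⟩
      simp only [hx, dif_pos]
      rw [show hx.choose = ⟨s, hs⟩ from emb.injective hx.choose_spec]
  obtain ⟨e, heS, hesur⟩ := hsur
  set T : J → Set I := fun β => ⋂₀ (e '' Iic β) with hT
  have hTmem : ∀ β, T β ∈ (U : Filter I) := by
    intro β
    refine hmin _ ?_ ?_
    · rintro s ⟨γ, _, rfl⟩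
      exact h𝒮mem _ (heS γ)
    · exact lt_of_le_of_lt mk_image_le (hIic β)
  have hTanti : ∀ {β γ : J}, γ ≤ β → T β ⊆ T γ := by
    intro β γ h
    exact sInter_subset_sInter (image_mono (Iic_subset_Iic.mpr h))
  have hTe : ∀ β, T β ⊆ e β := fun β => sInter_subset_of_mem ⟨β, mem_Iic.mpr le_rfl, rfl⟩
  -- the rank function r : I → J
  set Bad : I → Set J := fun i => {β | i ∉ T β} with hBad
  have wf : WellFounded ((· < ·) : J → J → Prop) := wellFounded_lt
  set r : I → J := fun i =>
    if h : (Bad i).Nonempty then wf.min (Bad i) h else Classical.arbitrary J with hr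
  have hrkey : ∀ β : J, {i | β < r i} ∈ (U : Filter I) := by
    intro β
    refine Filter.mem_of_superset
      (Filter.inter_mem (hTmem β) ((Ultrafilter.compl_mem_iff_notMem).mpr h𝒮not)) ?_
    rintro i ⟨hiT, hiC⟩
    show β < r i
    have hBadne : (Bad i).Nonempty := by
      have h1 : ¬ ∀ s ∈ 𝒮, i ∈ s := fun h => hiC (fun s hs => h s hs)
      push_neg at h1
      obtain ⟨s, hs, his⟩ := h1
      obtain ⟨β₀, rfl⟩ := hesur s hs
      exact ⟨β₀, fun hi => his (hTe β₀ hi)⟩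
    rw [hr]
    simp only [hBadne, dif_pos]
    by_contra hle
    push_neg at hle
    have hmem2 : wf.min (Bad i) hBadne ∈ Bad i := wf.min_mem _ hBadne
    exact hmem2 (hTanti hle hiT)
  set W := U.map r with hW
  have hWbdd : ∀ β : J, (Iic β)ᶜ ∈ (W : Filter J) := by
    intro β
    have h1 : r ⁻¹' (Iic β)ᶜ = {i | β < r i} := by
      ext i; simp [not_le]
    show (Iic β)ᶜ ∈ U.map r
    rw [Ultrafilter.mem_map, h1]
    exact hrkey β
  have hrank1 : Module.rank D ((J → D) ⧸ zeroSetSubmodule D (W : Filter J))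
      ≤ Module.rank D ((I → D) ⧸ zeroSetSubmodule D (U : Filter I)) := by
    have h2 : (W : Filter J) = Filter.map r (U : Filter I) := rfl
    rw [h2]
    exact rank_reduced_map_le _ r
  refine le_trans ?_ hrank1
  rcases lt_or_eq_of_le hμle with hlt | heq
  · -- small case: MO argument
    refine mol _ ?_ ?_
    · intro A hA
      by_contra hfin
      rw [Set.not_infinite] at hfin
      rcases Set.eq_empty_or_nonempty A with h | h
      · rw [h] at hA
        exact Filter.empty_notMem _ hA
      · obtain ⟨m, hm⟩ := hfin.bddAbove
        have hsub : A ⊆ Iic m := fun x hx => hm hx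
        obtain ⟨x, hx1, hx2⟩ := Filter.nonempty_of_mem (Filter.inter_mem hA (hWbdd m))
        exact hx2 (hsub hx1)
    · rw [hJcard, max_eq_right hμinf]
      exact hlt
  · -- equality case: diagonalisation
    refine dl _ ?_ ?_ ?_
    · exact hWbdd
    · intro b
      rw [← heq]
      exact Cardinal.mk_Iio_ord_toType b
    · rw [hJcard, ← heq]
end caseA

/-- The main result, for the left vector space structure. -/
theorem main_left [Infinite D] {I : Type u} (F : Filter I)
    (hF : ¬ ∃ (n : ℕ) (U : Fin n → Ultrafilter I),
      (∀ m, KappaComplete (Order.succ (Cardinal.mk D)) (U m : Filter I)) ∧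
      F = ⨆ m, (U m : Filter I)) :
    Module.rank D ((I → D) ⧸ zeroSetSubmodule D F)
      = Cardinal.mk ((I → D) ⧸ zeroSetSubmodule D F) := by
  have hge : #D ≤ Module.rank D ((I → D) ⧸ zeroSetSubmodule D F) := by
    rcases em (∃ U : Ultrafilter I, (U : Filter I) ≤ F
        ∧ ¬ KappaComplete (Order.succ #D) (U : Filter I)) with ⟨U, hle, hU⟩ | hno
    · exact le_trans (caseA U hU) (rank_reduced_le_of_le F _ hle)
    · push_neg at hno
      exact caseB F hno hF
  exact card_eq_rank_of_card_le_rank D _ hge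

section right
variable (D : Type u) [DivisionRing D] {I : Type u} (F : Filter I)

/-- Componentwise `op` as a `Dᵐᵒᵖ`-linear equivalence. -/
def opPiEquiv : (I → D) ≃ₗ[Dᵐᵒᵖ] (I → Dᵐᵒᵖ) where
  toFun f := fun i => MulOpposite.op (f i)
  invFun g := fun i => (g i).unop
  left_inv f := rfl
  right_inv g := rfl
  map_add' f g := by funext i; simp
  map_smul' c f := by
    funext i
    show MulOpposite.op ((c • f) i) = c • MulOpposite.op (f i)
    rw [Pi.smul_apply, MulOpposite.smul_eq_mul_unop, MulOpposite.op_mul, MulOpposite.op_unop,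
      smul_eq_mul]

lemma opPiEquiv_map_zeroSet :
    (zeroSetSubmoduleRight D F).map
      ((opPiEquiv D (I := I)) : (I → D) →ₗ[Dᵐᵒᵖ] (I → Dᵐᵒᵖ)) = zeroSetSubmodule Dᵐᵒᵖ F := by
  ext g
  rw [Submodule.mem_map]
  constructor
  · rintro ⟨f, hf, rfl⟩
    have hf' : {i | f i = 0} ∈ F := hf
    refine Filter.mem_of_superset hf' fun i hi => ?_
    have : f i = 0 := hi
    show MulOpposite.op (f i) = 0
    rw [this, MulOpposite.op_zero]
  · intro hg
    refine ⟨fun i => (g i).unop, ?_, rfl⟩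
    have hg' : {i | g i = 0} ∈ F := hg
    refine Filter.mem_of_superset hg' fun i hi => ?_
    have : g i = 0 := hi
    show (g i).unop = 0
    rw [this, MulOpposite.unop_zero]

noncomputable def quotRightEquiv :
    ((I → D) ⧸ zeroSetSubmoduleRight D F) ≃ₗ[Dᵐᵒᵖ] ((I → Dᵐᵒᵖ) ⧸ zeroSetSubmodule Dᵐᵒᵖ F) :=
  Submodule.Quotient.equiv _ _ (opPiEquiv D) (opPiEquiv_map_zeroSet D F)

end right


/-- extended Erdős–Kaplansky: Let `D` be an infinite division
ring, `I` a set, and `F` a filter on `I` which is not the intersection of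
finitely many `card(D)⁺`-complete ultrafilters on `I`.  Then the dimension of
the reduced power `D^I/F`, both as a left and as a right `D`-vector space,
equals its cardinality. -/
theorem rank_reduced_power_eq_card (D : Type u) [DivisionRing D] [Infinite D]
    {I : Type u} (F : Filter I)
    (hF : ¬ ∃ (n : ℕ) (U : Fin n → Ultrafilter I),
      (∀ m, KappaComplete (Order.succ (Cardinal.mk D)) (U m : Filter I)) ∧
      F = ⨆ m, (U m : Filter I)) :
    Module.rank D ((I → D) ⧸ zeroSetSubmodule D F)
        = Cardinal.mk ((I → D) ⧸ zeroSetSubmodule D F) ∧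
    Module.rank Dᵐᵒᵖ ((I → D) ⧸ zeroSetSubmoduleRight D F)
        = Cardinal.mk ((I → D) ⧸ zeroSetSubmoduleRight D F) := by
  constructor
  · exact main_left F hF
  · haveI : Infinite Dᵐᵒᵖ := Infinite.of_injective MulOpposite.op MulOpposite.op_injective
    have hmk : (Cardinal.mk Dᵐᵒᵖ) = #D := Cardinal.mk_congr (MulOpposite.opEquiv).symm
    have hF' : ¬ ∃ (n : ℕ) (U : Fin n → Ultrafilter I),
        (∀ m, KappaComplete (Order.succ (Cardinal.mk Dᵐᵒᵖ)) (U m : Filter I)) ∧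
        F = ⨆ m, (U m : Filter I) := by rwa [hmk]
    have h1 := main_left (D := Dᵐᵒᵖ) F hF'
    have e := quotRightEquiv D F
    calc Module.rank Dᵐᵒᵖ ((I → D) ⧸ zeroSetSubmoduleRight D F)
        = Module.rank Dᵐᵒᵖ ((I → Dᵐᵒᵖ) ⧸ zeroSetSubmodule Dᵐᵒᵖ F) := e.rank_eq
      _ = Cardinal.mk ((I → Dᵐᵒᵖ) ⧸ zeroSetSubmodule Dᵐᵒᵖ F) := h1
      _ = Cardinal.mk ((I → D) ⧸ zeroSetSubmoduleRight D F) := (Cardinal.mk_congr e.toEquiv).symm
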